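/- Let n be a positive integer, let ρ_1, …, ρ_n be separable states on ℂ^{dA} ⊗ ℂ^{dB}, and let M_1, …, M_n ∈ SEP* satisfy Σ_j M_j = 1 (identity) and Tr(M_j ρ_i) = δ_{ij} for all i, j. Then n ≤ dA·dB. -/

import Mathlib

open Matrix Kronecker ComplexOrder

noncomputable section

abbrev Mat (dA dB : ℕ) := Matrix (Fin dA × Fin dB) (Fin dA × Fin dB) ℂ

/-- Membership in the dual cone SEP*. -/
def InSEPDual {dA dB : ℕ} (M : Mat dA dB) : Prop :=
  M.IsHermitian ∧ ∀ (A : Matrix (Fin dA) (Fin dA) ℂ) (B : Matrix (Fin dB) (Fin dB) ℂ),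
    A.PosSemidef → B.PosSemidef → 0 ≤ ((A ⊗ₖ B) * M).trace

/-- A matrix on the bipartite system is separable if it is a finite sum of Kronecker
products of positive semidefinite matrices. -/
def SEPSeparable {dA dB : ℕ} (X : Mat dA dB) : Prop :=
  ∃ (m : ℕ) (A : Fin m → Matrix (Fin dA) (Fin dA) ℂ) (B : Fin m → Matrix (Fin dB) (Fin dB) ℂ),
    (∀ i, (A i).PosSemidef) ∧ (∀ i, (B i).PosSemidef) ∧ X = ∑ i, (A i) ⊗ₖ (B i)

lemma psd_trace_nonneg {d : Type*} [Fintype d] {A : Matrix d d ℂ} (hA : A.PosSemidef) :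
    0 ≤ A.trace := by
  classical
  refine Finset.sum_nonneg fun i _ => ?_
  exact hA.diag_nonneg

lemma psd_trace_smul_one_sub {d : Type*} [Fintype d] [DecidableEq d]
    {A : Matrix d d ℂ} (hA : A.PosSemidef) :
    (A.trace • (1 : Matrix d d ℂ) - A).PosSemidef := by
  have hH := hA.1
  set U : Matrix d d ℂ := (hH.eigenvectorUnitary : Matrix d d ℂ) with hUdef
  have hU1 : U * star U = 1 := (Matrix.mem_unitaryGroup_iff.mp hH.eigenvectorUnitary.2)
  have hU2 : star U * U = 1 := (Matrix.mem_unitaryGroup_iff'.mp hH.eigenvectorUnitary.2)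
  have hspec : A = U * diagonal (RCLike.ofReal ∘ hH.eigenvalues) * star U :=
    hH.spectral_theorem
  have htr : A.trace = ∑ i, (hH.eigenvalues i : ℂ) := by
    conv_lhs => rw [hspec]
    rw [Matrix.trace_mul_cycle, hU2, one_mul, Matrix.trace_diagonal]
    simp
  have key : A.trace • (1 : Matrix d d ℂ) - A
      = U * diagonal (fun i => A.trace - (hH.eigenvalues i : ℂ)) * star U := by
    have : diagonal (fun i => A.trace - (hH.eigenvalues i : ℂ))
        = A.trace • (1 : Matrix d d ℂ) - diagonal (RCLike.ofReal ∘ hH.eigenvalues) := by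
      rw [smul_one_eq_diagonal, ← diagonal_sub]
      rfl
    rw [this, Matrix.mul_sub, Matrix.sub_mul, ← hspec]
    congr 1
    rw [Matrix.mul_smul, Matrix.smul_mul, mul_one, hU1]
  rw [key]
  have hD : (diagonal (fun i => A.trace - (hH.eigenvalues i : ℂ))).PosSemidef := by
    refine Matrix.PosSemidef.diagonal fun i => ?_
    have : (∑ j, (hH.eigenvalues j : ℂ)) - (hH.eigenvalues i : ℂ)
        = ((∑ j, hH.eigenvalues j - hH.eigenvalues i : ℝ) : ℂ) := by push_cast; ring
    rw [Pi.zero_apply, htr, this, Complex.zero_le_real]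
    have h1 : hH.eigenvalues i ≤ ∑ j, hH.eigenvalues j :=
      Finset.single_le_sum (fun j _ => hA.eigenvalues_nonneg j) (Finset.mem_univ i)
    linarith
  simpa [Matrix.star_eq_conjTranspose] using hD.mul_mul_conjTranspose_same U

lemma sub_kron {dA dB : ℕ} (X Y : Matrix (Fin dA) (Fin dA) ℂ)
    (B : Matrix (Fin dB) (Fin dB) ℂ) : (X - Y) ⊗ₖ B = X ⊗ₖ B - Y ⊗ₖ B := by
  rw [sub_eq_add_neg, Matrix.add_kronecker, sub_eq_add_neg, ← neg_one_smul ℂ Y,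
    Matrix.smul_kronecker, neg_one_smul]

lemma kron_sub {dA dB : ℕ} (A : Matrix (Fin dA) (Fin dA) ℂ)
    (X Y : Matrix (Fin dB) (Fin dB) ℂ) : A ⊗ₖ (X - Y) = A ⊗ₖ X - A ⊗ₖ Y := by
  rw [sub_eq_add_neg, Matrix.kronecker_add, sub_eq_add_neg, ← neg_one_smul ℂ Y,
    Matrix.kronecker_smul, neg_one_smul]

lemma psd_smul_one {d : Type*} [Fintype d] [DecidableEq d] {t : ℂ} (ht : 0 ≤ t) :
    (t • (1 : Matrix d d ℂ)).PosSemidef := by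
  rw [smul_one_eq_diagonal]
  exact Matrix.PosSemidef.diagonal fun _ => ht

/-- Key step: the pairing of a SEP* element with `1 - ρ` is nonneg for separable ρ of trace 1. -/
lemma trace_one_sub_mul_nonneg {dA dB : ℕ} {ρ N : Mat dA dB}
    (hρ : SEPSeparable ρ) (hρtr : ρ.trace = 1) (hN : InSEPDual N) :
    0 ≤ (((1 : Mat dA dB) - ρ) * N).trace := by
  obtain ⟨m, A, B, hA, hB, rfl⟩ := hρ
  have htr : ∑ i, (A i).trace * (B i).trace = 1 := by
    simpa [Matrix.trace_sum, Matrix.trace_kronecker] using hρtr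
  have hdecomp : (1 : Mat dA dB) - ∑ i, (A i) ⊗ₖ (B i)
      = ∑ i, ((((A i).trace • 1 - A i) ⊗ₖ (B i))
            + (((A i).trace • (1 : Matrix (Fin dA) (Fin dA) ℂ)) ⊗ₖ ((B i).trace • 1 - B i))) := by
    have hterm : ∀ i, (((A i).trace • 1 - A i) ⊗ₖ (B i))
            + (((A i).trace • (1 : Matrix (Fin dA) (Fin dA) ℂ)) ⊗ₖ ((B i).trace • 1 - B i))
        = ((A i).trace * (B i).trace) • (1 : Mat dA dB) - (A i) ⊗ₖ (B i) := by
      intro i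
      rw [sub_kron, kron_sub]
      simp only [Matrix.smul_kronecker, Matrix.kronecker_smul, Matrix.one_kronecker_one,
        smul_smul, mul_comm ((B i).trace) ((A i).trace)]
      abel
    rw [Finset.sum_congr rfl fun i _ => hterm i, Finset.sum_sub_distrib, ← Finset.sum_smul, htr,
      one_smul]
  rw [hdecomp, Finset.sum_mul, Matrix.trace_sum]
  refine Finset.sum_nonneg fun i _ => ?_
  rw [add_mul, Matrix.trace_add]
  have h1 : 0 ≤ (((((A i).trace • 1 - A i)) ⊗ₖ (B i)) * N).trace :=
    hN.2 _ _ (psd_trace_smul_one_sub (hA i)) (hB i)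
  have h2 : 0 ≤ (((((A i).trace • (1 : Matrix (Fin dA) (Fin dA) ℂ))) ⊗ₖ
      ((B i).trace • 1 - B i)) * N).trace := by
    refine hN.2 _ _ ?_ (psd_trace_smul_one_sub (hB i))
    exact psd_smul_one (psd_trace_nonneg (hA i))
  exact add_nonneg h1 h2

theorem capacity_le (dA dB n : ℕ) (hdA : 0 < dA) (hdB : 0 < dB) (hn : 0 < n)
    (ρ : Fin n → Mat dA dB) (M : Fin n → Mat dA dB)
    (hρsep : ∀ i, SEPSeparable (ρ i)) (hρtr : ∀ i, (ρ i).trace = 1)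
    (hM : ∀ j, InSEPDual (M j)) (hMsum : ∑ j, M j = 1)
    (hdisc : ∀ i j, (M j * ρ i).trace = if i = j then 1 else 0) :
    n ≤ dA * dB := by
  have hkey : ∀ j, (1 : ℂ) ≤ (M j).trace := by
    intro j
    have h1 : (M j).trace = ((ρ j) * (M j)).trace + (((1 : Mat dA dB) - ρ j) * (M j)).trace := by
      rw [← Matrix.trace_add, ← Matrix.add_mul]
      simp
    have h2 : ((ρ j) * (M j)).trace = 1 := by
      rw [Matrix.trace_mul_comm]
      simpa using hdisc j j
    have h3 := trace_one_sub_mul_nonneg (hρsep j) (hρtr j) (hM j)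
    rw [h1, h2]
    exact le_add_of_nonneg_right h3
  have hsum : ∑ j, (M j).trace = ((dA * dB : ℕ) : ℂ) := by
    rw [← Matrix.trace_sum, hMsum, Matrix.trace_one]
    simp [Fintype.card_prod]
  have : ((n : ℕ) : ℂ) ≤ ((dA * dB : ℕ) : ℂ) := by
    calc ((n : ℕ) : ℂ) = ∑ _j : Fin n, (1 : ℂ) := by simp
    _ ≤ ∑ j, (M j).trace := Finset.sum_le_sum fun j _ => hkey j
    _ = _ := hsum
  exact_mod_cast this
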